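/- Let h : ℝ^d → ℂ be integrable, supported in a cube Q of sidelength 2^{-i} centered at c_Q, with ∫ h = 0. Let ψ be a Schwartz function and ψ_t(x) = t^{-d}ψ(x/t). Then for t = 2^{-(k+n₁)} with k + n₁ ≤ i, we have ‖ψ_t ∗ h‖_{L¹} ≤ C·2^{k+n₁−i}·‖h‖_{L¹}, where C depends only on d and ψ (via ‖∇ψ‖). -/

import Mathlib

open MeasureTheory

variable {d : ℕ}

local notation "E" => EuclideanSpace ℝ (Fin d)

lemma fderiv_cont (ψ : SchwartzMap (EuclideanSpace ℝ (Fin d)) ℂ) :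
    Continuous fun x : E => fderiv ℝ ψ x := by
  have : (fun x : E => fderiv ℝ ψ x) = fun x => SchwartzMap.fderivCLM ℝ E ℂ ψ x := by
    ext1 x; rw [SchwartzMap.fderivCLM_apply]
  rw [this]
  exact (SchwartzMap.fderivCLM ℝ E ℂ ψ).continuous

lemma ftc_pt (ψ : SchwartzMap (EuclideanSpace ℝ (Fin d)) ℂ) (u v : E) :
    ‖ψ (u + v) - ψ u‖ ≤ ∫ t in (0:ℝ)..1, ‖fderiv ℝ ψ (u + t • v)‖ * ‖v‖ := by
  have hderiv : ∀ t : ℝ, HasDerivAt (fun t : ℝ => ψ (u + t • v))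
      ((fderiv ℝ ψ (u + t • v)) v) t := by
    intro t
    have h1 : HasFDerivAt ψ (fderiv ℝ ψ (u + t • v)) (u + t • v) :=
      (ψ.differentiable.differentiableAt).hasFDerivAt
    have h2 : HasDerivAt (fun t : ℝ => u + t • v) v t := by
      simpa using ((hasDerivAt_id t).smul_const v).const_add u
    exact h1.comp_hasDerivAt t h2
  have hcont : Continuous fun t : ℝ => (fderiv ℝ ψ (u + t • v)) v := by
    apply (ContinuousLinearMap.apply ℝ ℂ v).continuous.comp
    exact (fderiv_cont ψ).comp (continuous_const.add (continuous_id.smul continuous_const))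
  have heq : ∫ t in (0:ℝ)..1, (fderiv ℝ ψ (u + t • v)) v = ψ (u + v) - ψ u := by
    have := intervalIntegral.integral_eq_sub_of_hasDerivAt
      (f := fun t : ℝ => ψ (u + t • v)) (f' := fun t => (fderiv ℝ ψ (u + t • v)) v)
      (fun t _ => hderiv t) (hcont.intervalIntegrable 0 1)
    simpa using this
  rw [← heq]
  calc ‖∫ t in (0:ℝ)..1, (fderiv ℝ ψ (u + t • v)) v‖
      ≤ ∫ t in (0:ℝ)..1, ‖(fderiv ℝ ψ (u + t • v)) v‖ :=
        intervalIntegral.norm_integral_le_integral_norm zero_le_one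
    _ ≤ ∫ t in (0:ℝ)..1, ‖fderiv ℝ ψ (u + t • v)‖ * ‖v‖ := by
        apply intervalIntegral.integral_mono_on zero_le_one
          (hcont.norm.intervalIntegrable 0 1)
          ((((fderiv_cont ψ).comp (continuous_const.add
            (continuous_id.smul continuous_const))).norm.mul continuous_const).intervalIntegrable 0 1)
        intro t _
        exact (fderiv ℝ ψ (u + t • v)).le_opNorm v

lemma ftc_pt_enorm (ψ : SchwartzMap (EuclideanSpace ℝ (Fin d)) ℂ) (u v : E) :
    (‖ψ (u + v) - ψ u‖₊ : ENNReal) ≤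
      (∫⁻ t in Set.Ioc (0:ℝ) 1, ‖fderiv ℝ ψ (u + t • v)‖₊) * ‖v‖₊ := by
  have hmeas : AEStronglyMeasurable (fun t : ℝ => ‖fderiv ℝ ψ (u + t • v)‖ * ‖v‖)
      (volume.restrict (Set.Ioc (0:ℝ) 1)) :=
    (((fderiv_cont ψ).comp (continuous_const.add
      (continuous_id.smul continuous_const))).norm.mul continuous_const).aestronglyMeasurable
  have h1 : ∫ t in (0:ℝ)..1, ‖fderiv ℝ ψ (u + t • v)‖ * ‖v‖
      = (∫⁻ t in Set.Ioc (0:ℝ) 1,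
          ENNReal.ofReal (‖fderiv ℝ ψ (u + t • v)‖ * ‖v‖)).toReal := by
    rw [intervalIntegral.integral_of_le zero_le_one]
    exact integral_eq_lintegral_of_nonneg_ae
      (Filter.Eventually.of_forall fun t => by positivity) hmeas
  have h2 : (‖ψ (u + v) - ψ u‖₊ : ENNReal) = ENNReal.ofReal ‖ψ (u + v) - ψ u‖ :=
    (ofReal_norm _).symm
  rw [h2]
  calc ENNReal.ofReal ‖ψ (u + v) - ψ u‖
      ≤ ENNReal.ofReal ((∫⁻ t in Set.Ioc (0:ℝ) 1,
          ENNReal.ofReal (‖fderiv ℝ ψ (u + t • v)‖ * ‖v‖)).toReal) := by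
        apply ENNReal.ofReal_le_ofReal
        rw [← h1]; exact ftc_pt ψ u v
    _ ≤ ∫⁻ t in Set.Ioc (0:ℝ) 1, ENNReal.ofReal (‖fderiv ℝ ψ (u + t • v)‖ * ‖v‖) :=
        ENNReal.ofReal_toReal_le
    _ = ∫⁻ t in Set.Ioc (0:ℝ) 1, (‖fderiv ℝ ψ (u + t • v)‖₊ : ENNReal) * ‖v‖₊ := by
        congr 1; ext t
        rw [ENNReal.ofReal_mul (norm_nonneg _), ofReal_norm,
          ofReal_norm, enorm_eq_nnnorm, enorm_eq_nnnorm]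
    _ = (∫⁻ t in Set.Ioc (0:ℝ) 1, (‖fderiv ℝ ψ (u + t • v)‖₊ : ENNReal)) * ‖v‖₊ := by
        apply lintegral_mul_const''
        exact (((fderiv_cont ψ).comp (continuous_const.add
          (continuous_id.smul continuous_const))).aestronglyMeasurable).enorm

lemma translation_L1 (ψ : SchwartzMap (EuclideanSpace ℝ (Fin d)) ℂ) (v : E) :
    ∫⁻ u, (‖ψ (u + v) - ψ u‖₊ : ENNReal) ≤
      (‖v‖₊ : ENNReal) * ∫⁻ u, (‖fderiv ℝ ψ u‖₊ : ENNReal) := by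
  have hswap : ∫⁻ u, ∫⁻ t in Set.Ioc (0:ℝ) 1, (‖fderiv ℝ ψ (u + t • v)‖₊ : ENNReal)
      = ∫⁻ t in Set.Ioc (0:ℝ) 1, ∫⁻ u, (‖fderiv ℝ ψ (u + t • v)‖₊ : ENNReal) := by
    apply lintegral_lintegral_swap
    apply Continuous.aemeasurable
    exact ENNReal.continuous_coe.comp (((fderiv_cont ψ).comp
      (continuous_fst.add (continuous_snd.smul continuous_const))).nnnorm)
  calc ∫⁻ u, (‖ψ (u + v) - ψ u‖₊ : ENNReal)
      ≤ ∫⁻ u, (∫⁻ t in Set.Ioc (0:ℝ) 1, (‖fderiv ℝ ψ (u + t • v)‖₊ : ENNReal)) * ‖v‖₊ :=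
        lintegral_mono fun u => ftc_pt_enorm ψ u v
    _ = (∫⁻ u, ∫⁻ t in Set.Ioc (0:ℝ) 1, (‖fderiv ℝ ψ (u + t • v)‖₊ : ENNReal)) * ‖v‖₊ :=
        lintegral_mul_const' _ _ ENNReal.coe_ne_top
    _ = (∫⁻ t in Set.Ioc (0:ℝ) 1, ∫⁻ u, (‖fderiv ℝ ψ (u + t • v)‖₊ : ENNReal)) * ‖v‖₊ := by
        rw [hswap]
    _ = (∫⁻ t in Set.Ioc (0:ℝ) 1, ∫⁻ u, (‖fderiv ℝ ψ u‖₊ : ENNReal)) * ‖v‖₊ := by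
        congr 1; apply setLIntegral_congr_fun_ae measurableSet_Ioc
        exact Filter.Eventually.of_forall fun t _ =>
          lintegral_add_right_eq_self (fun u => (‖fderiv ℝ ψ u‖₊ : ENNReal)) (t • v)
    _ = (‖v‖₊ : ENNReal) * ∫⁻ u, (‖fderiv ℝ ψ u‖₊ : ENNReal) := by
        rw [lintegral_const, Measure.restrict_apply_univ, Real.volume_Ioc]
        simp [mul_comm]

lemma lintegral_comp_smul' (f : E → ENNReal) (hf : Measurable f) {R : ℝ} (hR : R ≠ 0) :
    ∫⁻ x : E, f (R • x) = ENNReal.ofReal |(R ^ d)⁻¹| * ∫⁻ x, f x := by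
  have h1 : ∫⁻ x : E, f (R • x) = ∫⁻ y, f y ∂(Measure.map (fun x : E => R • x) volume) :=
    (lintegral_map hf (measurable_const_smul R)).symm
  rw [h1, MeasureTheory.Measure.map_addHaar_smul volume hR, lintegral_smul_measure, smul_eq_mul,
    finrank_euclideanSpace_fin]

lemma xint (ψ : SchwartzMap (EuclideanSpace ℝ (Fin d)) ℂ) (y c : E) {a : ℝ} (ha : a ≠ 0) :
    ∫⁻ x, (‖ψ (a • (x - y)) - ψ (a • (x - c))‖₊ : ENNReal)
      ≤ ENNReal.ofReal |(a ^ d)⁻¹| *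
        ((‖a • (y - c)‖₊ : ENNReal) * ∫⁻ u, (‖fderiv ℝ ψ u‖₊ : ENNReal)) := by
  set w : E := a • (y - c) with hw
  have key : ∀ x : E, a • (x - c) = a • (x - y) + w := by
    intro x; rw [hw, ← smul_add]; congr 1; abel
  have h1 : ∫⁻ x, (‖ψ (a • (x - y)) - ψ (a • (x - c))‖₊ : ENNReal)
      = ∫⁻ x, (‖ψ (a • ((x - y))) - ψ (a • (x - y) + w)‖₊ : ENNReal) := by
    congr 1; ext x; rw [key x]
  have h2 : ∫⁻ x, (‖ψ (a • (x - y)) - ψ (a • (x - y) + w)‖₊ : ENNReal)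
      = ∫⁻ x, (‖ψ (a • x) - ψ (a • x + w)‖₊ : ENNReal) :=
    lintegral_sub_right_eq_self (fun z => (‖ψ (a • z) - ψ (a • z + w)‖₊ : ENNReal)) y
  have hmeas : Measurable fun u : E => (‖ψ u - ψ (u + w)‖₊ : ENNReal) := by
    apply Measurable.coe_nnreal_ennreal
    exact (ψ.continuous.sub (ψ.continuous.comp (continuous_id.add continuous_const))).nnnorm.measurable
  have h3 : ∫⁻ x : E, (‖ψ (a • x) - ψ (a • x + w)‖₊ : ENNReal)
      = ENNReal.ofReal |(a ^ d)⁻¹| * ∫⁻ u, (‖ψ u - ψ (u + w)‖₊ : ENNReal) :=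
    lintegral_comp_smul' (fun u => (‖ψ u - ψ (u + w)‖₊ : ENNReal)) hmeas ha
  rw [h1, h2, h3]
  apply mul_le_mul_right
  calc ∫⁻ u, (‖ψ u - ψ (u + w)‖₊ : ENNReal) = ∫⁻ u, (‖ψ (u + w) - ψ u‖₊ : ENNReal) := by
        congr 1; ext u; rw [← neg_sub (ψ (u + w)) (ψ u), nnnorm_neg]
    _ ≤ (‖w‖₊ : ENNReal) * ∫⁻ u, (‖fderiv ℝ ψ u‖₊ : ENNReal) := translation_L1 ψ w

lemma cube_norm_le (x : E) (r : ℝ) (hr : 0 ≤ r) (hx : ∀ j, |x j| ≤ r) :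
    ‖x‖ ≤ Real.sqrt d * r := by
  rw [EuclideanSpace.norm_eq,
    show Real.sqrt d * r = Real.sqrt (d * r ^ 2) by
      rw [Real.sqrt_mul (Nat.cast_nonneg d), Real.sqrt_sq hr]]
  apply Real.sqrt_le_sqrt
  calc ∑ j, ‖x j‖ ^ 2 ≤ ∑ _j : Fin d, r ^ 2 := by
        apply Finset.sum_le_sum
        intro j _
        have h1 := hx j
        have h2 : ‖x j‖ = |x j| := Real.norm_eq_abs _
        nlinarith [abs_nonneg (x j)]
    _ = d * r ^ 2 := by simp [Finset.sum_const, Finset.card_univ]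

/-- If `h` is integrable, supported in a cube of sidelength `2^{-i}` centered at `c`, with
`∫ h = 0`, and `ψ` is Schwartz, then for `t = 2^{-(k+n₁)}` with `k+n₁ ≤ i` one has
`‖ψ_t ∗ h‖_{L¹} ≤ C 2^{k+n₁−i} ‖h‖_{L¹}`, with `C` depending only on `d` and `ψ`. -/
theorem stmt5 (d : ℕ) (hd : 1 ≤ d) (ψ : SchwartzMap (EuclideanSpace ℝ (Fin d)) ℂ) :
    ∃ C : ℝ, 0 < C ∧ ∀ (i k : ℤ) (n₁ : ℕ), k + (n₁ : ℤ) ≤ i →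
      ∀ (h : EuclideanSpace ℝ (Fin d) → ℂ) (c : EuclideanSpace ℝ (Fin d)),
        Integrable h →
        (Function.support h ⊆ {y | ∀ j, |y j - c j| ≤ (2:ℝ) ^ (-i) / 2}) →
        (∫ y, h y) = 0 →
        (∫ x, ‖∫ y, ((2:ℝ) ^ ((k + (n₁ : ℤ)) * d) : ℝ) •
            (ψ ((2:ℝ) ^ (k + (n₁ : ℤ)) • (x - y)) * h y)‖) ≤
          C * (2:ℝ) ^ (k + (n₁ : ℤ) - i) * ∫ y, ‖h y‖ := by
  classical
  set I : ENNReal := ∫⁻ u : EuclideanSpace ℝ (Fin d), (‖fderiv ℝ ψ u‖₊ : ENNReal) with hI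
  have hIfin : I ≠ ⊤ := by
    have hint : Integrable (fun u : EuclideanSpace ℝ (Fin d) => fderiv ℝ ψ u) volume := by
      have h1 := (SchwartzMap.fderivCLM ℝ (EuclideanSpace ℝ (Fin d)) ℂ ψ).integrable (μ := volume)
      have h2 : (⇑(SchwartzMap.fderivCLM ℝ (EuclideanSpace ℝ (Fin d)) ℂ ψ) : EuclideanSpace ℝ (Fin d) → _)
          = fun u => fderiv ℝ ψ u := by
        ext1 u; exact SchwartzMap.fderivCLM_apply ℝ ψ u
      rwa [h2] at h1
    exact hint.2.ne
  refine ⟨Real.sqrt d / 2 * I.toReal + 1, by positivity, ?_⟩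
  intro i k n₁ hki h c hint hsupp hzero
  set s : ℤ := k + (n₁ : ℤ) with hs
  set a : ℝ := (2:ℝ) ^ s with ha
  have ha0 : (0:ℝ) < a := by positivity
  set A : ℝ := (2:ℝ) ^ (s * (d:ℤ)) with hA
  have hA0 : (0:ℝ) < A := by positivity
  have hAa : a ^ d = A := by
    rw [ha, hA, ← zpow_natCast ((2:ℝ)^s), ← zpow_mul]
  -- boundedness of ψ
  obtain ⟨M, hM⟩ : ∃ M, ∀ z, ‖ψ z‖ ≤ M := ⟨_, fun z => SchwartzMap.norm_le_seminorm ℝ ψ z⟩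
  -- integrability of pieces
  have hib : ∀ g : EuclideanSpace ℝ (Fin d) → ℂ, Continuous g → (∀ z, ‖g z‖ ≤ M) →
      Integrable (fun y => g y * h y) volume := fun g hg hgb =>
    hint.bdd_mul (c := M) hg.aestronglyMeasurable (Filter.Eventually.of_forall hgb)
  have hcont1 : ∀ x, Continuous fun y : EuclideanSpace ℝ (Fin d) => ψ (a • (x - y)) := by
    intro x
    exact ψ.continuous.comp ((continuous_const.sub continuous_id).const_smul a)
  -- step 0 : replace integrand using vanishing mean
  have eq1 : ∀ x, (∫ y, A • (ψ (a • (x - y)) * h y))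
      = ∫ y, A • ((ψ (a • (x - y)) - ψ (a • (x - c))) * h y) := by
    intro x
    have i1 : Integrable (fun y => ψ (a • (x - y)) * h y) volume :=
      hib _ (hcont1 x) (fun z => hM _)
    have i2 : Integrable (fun y => ψ (a • (x - c)) * h y) volume :=
      hib _ continuous_const (fun z => hM _)
    have : (fun y => A • ((ψ (a • (x - y)) - ψ (a • (x - c))) * h y))
        = fun y => A • (ψ (a • (x - y)) * h y) - A • (ψ (a • (x - c)) * h y) := by
      ext y; rw [sub_mul, smul_sub]
    have i1' : Integrable (fun y => A • (ψ (a • (x - y)) * h y)) volume := i1.smul A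
    have i2' : Integrable (fun y => A • (ψ (a • (x - c)) * h y)) volume := i2.smul A
    rw [this, integral_sub i1' i2']
    have : ∫ y, A • (ψ (a • (x - c)) * h y) = A • (ψ (a • (x - c)) * ∫ y, h y) := by
      rw [integral_smul, integral_const_mul]
    rw [this, hzero, mul_zero, smul_zero, sub_zero]
  -- measurability of the inner integral (of the modified integrand)
  have hprodmeas : AEStronglyMeasurable
      (fun z : (EuclideanSpace ℝ (Fin d)) × (EuclideanSpace ℝ (Fin d)) =>
        A • ((ψ (a • (z.1 - z.2)) - ψ (a • (z.1 - c))) * h z.2)) (volume.prod volume) := by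
    refine AEStronglyMeasurable.const_smul (f := fun z : (EuclideanSpace ℝ (Fin d)) × (EuclideanSpace ℝ (Fin d)) =>
      (ψ (a • (z.1 - z.2)) - ψ (a • (z.1 - c))) * h z.2) ?_ A
    apply AEStronglyMeasurable.fun_mul _ hint.1.comp_snd
    apply Continuous.aestronglyMeasurable
    exact (ψ.continuous.comp ((continuous_fst.sub continuous_snd).const_smul a)).sub
      (ψ.continuous.comp ((continuous_fst.sub continuous_const).const_smul a))
  have hFmeas : AEStronglyMeasurable
      (fun x => ∫ y, A • ((ψ (a • (x - y)) - ψ (a • (x - c))) * h y)) volume :=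
    hprodmeas.integral_prod_right'
  -- rewrite the LHS as toReal of a lintegral
  have lhs_eq : (∫ x, ‖∫ y, A • (ψ (a • (x - y)) * h y)‖)
      = (∫⁻ x, (‖∫ y, A • ((ψ (a • (x - y)) - ψ (a • (x - c))) * h y)‖₊ : ENNReal)).toReal := by
    rw [show (fun x => ‖∫ y, A • (ψ (a • (x - y)) * h y)‖)
        = fun x => ‖∫ y, A • ((ψ (a • (x - y)) - ψ (a • (x - c))) * h y)‖ by
      ext x; rw [eq1 x]]
    exact integral_norm_eq_lintegral_enorm hFmeas
  set J : ENNReal := ∫⁻ y, (‖h y‖₊ : ENNReal) with hJdef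
  have hJfin : J ≠ ⊤ := hint.2.ne
  set r : ℝ := Real.sqrt d / 2 * (2:ℝ) ^ (s - i) with hr
  have hr0 : 0 < r := by positivity
  -- per-y bound on the inner x-lintegral
  have peryBound : ∀ y, (∫⁻ x, (‖A • ((ψ (a • (x - y)) - ψ (a • (x - c))) * h y)‖₊ : ENNReal))
      ≤ ENNReal.ofReal r * I * ‖h y‖₊ := by
    intro y
    have hDmeas : AEMeasurable
        (fun x => (‖ψ (a • (x - y)) - ψ (a • (x - c))‖₊ : ENNReal)) volume := by
      apply Continuous.aemeasurable
      apply ENNReal.continuous_coe.comp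
      exact ((ψ.continuous.comp ((continuous_id.sub continuous_const).const_smul a)).sub
        (ψ.continuous.comp ((continuous_id.sub continuous_const).const_smul a))).nnnorm
    have hnn : ∀ x, (‖A • ((ψ (a • (x - y)) - ψ (a • (x - c))) * h y)‖₊ : ENNReal)
        = ENNReal.ofReal A * ((‖ψ (a • (x - y)) - ψ (a • (x - c))‖₊ : ENNReal) * ‖h y‖₊) := by
      intro x
      rw [nnnorm_smul, nnnorm_mul, ENNReal.coe_mul, ENNReal.coe_mul,
        ← enorm_eq_nnnorm A, Real.enorm_eq_ofReal hA0.le]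
    calc (∫⁻ x, (‖A • ((ψ (a • (x - y)) - ψ (a • (x - c))) * h y)‖₊ : ENNReal))
        = ENNReal.ofReal A *
            ((∫⁻ x, (‖ψ (a • (x - y)) - ψ (a • (x - c))‖₊ : ENNReal)) * ‖h y‖₊) := by
          simp_rw [hnn]
          rw [lintegral_const_mul'' _ (hDmeas.mul_const _), lintegral_mul_const'' _ hDmeas]
      _ ≤ ENNReal.ofReal A *
            ((ENNReal.ofReal |(a ^ d)⁻¹| * ((‖a • (y - c)‖₊ : ENNReal) * I)) * ‖h y‖₊) := by
          gcongr
          exact xint ψ y c ha0.ne'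
      _ = (ENNReal.ofReal A * ENNReal.ofReal |(a ^ d)⁻¹|) *
            ((‖a • (y - c)‖₊ : ENNReal) * I * ‖h y‖₊) := by ring
      _ = (‖a • (y - c)‖₊ : ENNReal) * I * ‖h y‖₊ := by
          rw [hAa, abs_of_pos (inv_pos.2 hA0), ← ENNReal.ofReal_mul hA0.le,
            mul_inv_cancel₀ hA0.ne']
          simp
      _ ≤ ENNReal.ofReal r * I * ‖h y‖₊ := by
          by_cases hy : h y = 0
          · simp [hy]
          · have hcube := hsupp hy
            have h1 : ‖y - c‖ ≤ Real.sqrt d * ((2:ℝ) ^ (-i) / 2) := by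
              apply cube_norm_le _ _ (by positivity)
              intro j
              simpa using hcube j
            have h2 : ‖a • (y - c)‖ ≤ r := by
              rw [norm_smul, Real.norm_eq_abs, abs_of_pos ha0, hr]
              calc a * ‖y - c‖ ≤ a * (Real.sqrt d * ((2:ℝ) ^ (-i) / 2)) :=
                    mul_le_mul_of_nonneg_left h1 ha0.le
                _ = Real.sqrt d / 2 * (a * (2:ℝ) ^ (-i)) := by ring
                _ = Real.sqrt d / 2 * (2:ℝ) ^ (s - i) := by
                    rw [ha, ← zpow_add₀ (two_ne_zero : (2:ℝ) ≠ 0), sub_eq_add_neg]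
            gcongr
            rw [← enorm_eq_nnnorm, ← ofReal_norm]
            exact ENNReal.ofReal_le_ofReal h2
  -- the global bound
  have main : (∫⁻ x, (‖∫ y, A • ((ψ (a • (x - y)) - ψ (a • (x - c))) * h y)‖₊ : ENNReal))
      ≤ ENNReal.ofReal r * I * J := by
    calc (∫⁻ x, (‖∫ y, A • ((ψ (a • (x - y)) - ψ (a • (x - c))) * h y)‖₊ : ENNReal))
        ≤ ∫⁻ x, ∫⁻ y, (‖A • ((ψ (a • (x - y)) - ψ (a • (x - c))) * h y)‖₊ : ENNReal) :=
          lintegral_mono fun x => enorm_integral_le_lintegral_enorm _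
      _ = ∫⁻ y, ∫⁻ x, (‖A • ((ψ (a • (x - y)) - ψ (a • (x - c))) * h y)‖₊ : ENNReal) := by
          apply lintegral_lintegral_swap
          exact hprodmeas.enorm
      _ ≤ ∫⁻ y, ENNReal.ofReal r * I * ‖h y‖₊ := lintegral_mono peryBound
      _ = ENNReal.ofReal r * I * J := by
          rw [hJdef, lintegral_const_mul'' (f := fun y => (‖h y‖₊ : ENNReal)) _
            hint.1.enorm]
  have hRfin : ENNReal.ofReal r * I * J ≠ ⊤ :=
    ENNReal.mul_ne_top (ENNReal.mul_ne_top ENNReal.ofReal_ne_top hIfin) hJfin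
  have hnorm_eq : (∫ y, ‖h y‖) = J.toReal := integral_norm_eq_lintegral_enorm hint.1
  rw [lhs_eq, hnorm_eq]
  calc (∫⁻ x, (‖∫ y, A • ((ψ (a • (x - y)) - ψ (a • (x - c))) * h y)‖₊ : ENNReal)).toReal
      ≤ (ENNReal.ofReal r * I * J).toReal := ENNReal.toReal_mono hRfin main
    _ = r * I.toReal * J.toReal := by
        rw [ENNReal.toReal_mul, ENNReal.toReal_mul, ENNReal.toReal_ofReal hr0.le]
    _ ≤ (Real.sqrt d / 2 * I.toReal + 1) * (2:ℝ) ^ (s - i) * J.toReal := by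
        have h2si : (0:ℝ) < (2:ℝ) ^ (s - i) := by positivity
        have hIt : 0 ≤ I.toReal := ENNReal.toReal_nonneg
        have hJt : 0 ≤ J.toReal := ENNReal.toReal_nonneg
        have hsd : 0 ≤ Real.sqrt d := Real.sqrt_nonneg _
        rw [hr]
        nlinarith [mul_nonneg (mul_nonneg hsd hIt) (mul_nonneg h2si.le hJt),
          mul_nonneg h2si.le hJt]
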